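/- Let μ be a Borel probability measure on ℝ with μ((-∞,0)) = 0, with finite mean m = ∫ x dμ(x), and let θ > 0 satisfy F(θ) = μ((-∞,θ]) > 0 and μ((θ,∞)) > 0. Then ( 2·∫_{[0,θ]} x dμ(x) + θ·μ((θ,∞)) ) / F(θ) < 2m if and only if m < ( ∫_{(θ,∞)} (x − θ) dμ(x) ) / μ((θ,∞)) + θ/2. -/

import Mathlib

open MeasureTheory

/-- **Lemma 3.** For a service-time distribution `μ` (Borel probability measure on
`ℝ` with `μ((-∞,0)) = 0`) with finite mean `m`, and `θ > 0` with `F(θ) = μ((-∞,θ]) > 0` and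
`μ((θ,∞)) > 0`, the fixed-threshold policy strictly beats the zero-wait policy, i.e.
`(2 ∫_{[0,θ]} x dμ + θ μ((θ,∞))) / F(θ) < 2 m`, if and only if
`m < E[X - θ | X > θ] + θ/2 = (∫_{(θ,∞)} (x-θ) dμ) / μ((θ,∞)) + θ/2`. -/
theorem stmt_9
    (μ : Measure ℝ) [IsProbabilityMeasure μ] (hnonneg : μ (Set.Iio 0) = 0)
    (hint : Integrable (fun x : ℝ => x) μ)
    (m : ℝ) (hm : m = ∫ x, x ∂μ)
    (θ : ℝ) (hθ : 0 < θ)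
    (hF : 0 < (μ (Set.Iic θ)).toReal) (hT : 0 < (μ (Set.Ioi θ)).toReal) :
    (2 * ∫ x in Set.Icc 0 θ, x ∂μ + θ * (μ (Set.Ioi θ)).toReal) / (μ (Set.Iic θ)).toReal
        < 2 * m
      ↔ m < (∫ x in Set.Ioi θ, (x - θ) ∂μ) / (μ (Set.Ioi θ)).toReal + θ / 2 := by
  set F := (μ (Set.Iic θ)).toReal with hFdef
  set T := (μ (Set.Ioi θ)).toReal with hTdef
  set A := ∫ x in Set.Icc 0 θ, x ∂μ with hA
  set B := ∫ x in Set.Ioi θ, x ∂μ with hB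
  -- F + T = 1
  have hcompl : μ (Set.Iic θ) + μ (Set.Ioi θ) = 1 := by
    rw [← Set.compl_Iic, measure_add_measure_compl measurableSet_Iic, measure_univ]
  have hFT : F + T = 1 := by
    rw [hFdef, hTdef, ← ENNReal.toReal_add (measure_ne_top μ _) (measure_ne_top μ _), hcompl]
    simp
  -- m = A + B
  have hrestr : μ.restrict (Set.Ici 0) = μ := by
    apply Measure.restrict_eq_self_of_ae_mem
    rw [Filter.eventually_iff, mem_ae_iff]
    show μ (Set.Ici 0)ᶜ = 0
    rw [Set.compl_Ici]; exact hnonneg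
  have hmsplit : m = A + B := by
    rw [hm, ← hrestr, ← Set.Icc_union_Ioi_eq_Ici hθ.le,
      setIntegral_union ((Set.Iic_disjoint_Ioi le_rfl).mono_left Set.Icc_subset_Iic_self) measurableSet_Ioi
        (hint.integrableOn) (hint.integrableOn)]
  -- ∫_{Ioi θ} (x - θ) = B - θ T
  have hsub : (∫ x in Set.Ioi θ, (x - θ) ∂μ) = B - θ * T := by
    rw [integral_sub hint.integrableOn (integrableOn_const (measure_ne_top μ _))]
    rw [setIntegral_const, smul_eq_mul, measureReal_def, hTdef, mul_comm]
  rw [hsub, div_lt_iff₀ hF, ← sub_lt_iff_lt_add, lt_div_iff₀ hT]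
  have hFe : F = 1 - T := by linarith
  have h2 : 2 * m * F = 2 * m - 2 * (m * T) := by rw [hFe]; ring
  constructor <;> intro h <;> nlinarith [h2, hmsplit, h]
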